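/- arXiv:2311.10180 — 2 statements merged into one kernel-verified Lean document; each statement's English description precedes it below -/
import Mathlib

section
/- The composition type of a right composition of packed words is obtained by interstice insertion: let u be a packed word of length n, i ∈ {1,…,n}, v a packed word of length m, and set r := st(u)(i). For any word x of length ℓ, let enc(x) ∈ {1,2}^{ℓ−1} be defined by enc(x)(p) = 2 if χ(x)(p) < χ(x)(p+1) and enc(x)(p) = 1 otherwise, where χ(x) is the weakly increasing rearrangement of x. Then enc(u ∘→_i v) = enc(u)(1,…,r−1) · enc(v) · enc(u)(r,…,n−1). -/
/-- Increment by `α` every letter strictly greater than `β`. -/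
def Inc (α β : ℕ) (u : List ℕ) : List ℕ := u.map fun a => if β < a then a + α else a

/-- Maximal letter of a word. -/
def maxLetter (v : List ℕ) : ℕ := v.foldr max 0

/-- A packed word whose letter set is exactly `{1, …, k}`. -/
def IsPackedOn (k : ℕ) (w : List ℕ) : Prop := w.toFinset = Finset.Icc 1 k

/-- A packed word. -/
def IsPacked (w : List ℕ) : Prop := ∃ k, IsPackedOn k w

/-- A permutation of `{1, …, n}` identified with the word `σ(1) ⋯ σ(n)`. -/
def IsPermWord (n : ℕ) (σ : List ℕ) : Prop :=
  σ.length = n ∧ σ.toFinset = Finset.Icc 1 n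

/-- `σ` is the standardization of `w`: a permutation word of `{1, …, n}` with the same
inversions as `w` (0-based indexing). -/
def IsStdOf (w σ : List ℕ) : Prop :=
  IsPermWord w.length σ ∧
    ∀ i j : ℕ, i < j → j < w.length →
      (w.getD j 0 < w.getD i 0 ↔ σ.getD j 0 < σ.getD i 0)

/-- The weakly increasing rearrangement (composition type) of a word. -/
def chi (w : List ℕ) : List ℕ := List.insertionSort (· ≤ ·) w

/-- Right composition `u ∘→_i v` of packed words (`i` is 1-based). -/
def rightComp (u : List ℕ) (i : ℕ) (v : List ℕ) : List ℕ :=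
  Inc (maxLetter v - 1) (u.getD (i - 1) 0) (u.take (i - 1))
    ++ Inc (u.getD (i - 1) 0 - 1) 0 v
    ++ Inc (maxLetter v - 1) (u.getD (i - 1) 0 - 1) (u.drop i)

/-- Left composition `u ∘←_i v` of packed words: replace in `Inc (m-1) i u` every
occurrence of the letter `i` by the word `Inc (i-1) 0 v`, where `m` is the maximal
letter of `v`. -/
def leftComp (u : List ℕ) (i : ℕ) (v : List ℕ) : List ℕ :=
  u.flatMap fun a =>
    if a = i then Inc (i - 1) 0 v else [if i < a then a + (maxLetter v - 1) else a]

/-- Block composition `B_i(α, β)` of permutation words (`i` is 1-based, `β` a permutation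
of `{1, …, m}` with `m = β.length`). -/
def blockComp (α : List ℕ) (i : ℕ) (β : List ℕ) : List ℕ :=
  Inc (β.length - 1) (α.getD (i - 1) 0) (α.take (i - 1))
    ++ Inc (α.getD (i - 1) 0 - 1) 0 β
    ++ Inc (β.length - 1) (α.getD (i - 1) 0 - 1) (α.drop i)

/-- The inverse of a permutation word. -/
def invWord (σ : List ℕ) : List ℕ :=
  (List.range σ.length).map fun p => σ.idxOf (p + 1) + 1

/-- The right action of a permutation word `σ` of `{1, …, n}` on a packed word with
letter set `{1, …, n}`: the `p`-th letter of `u · σ` is `σ⁻¹(u(p))`. -/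
def permAct (u σ : List ℕ) : List ℕ := u.map fun a => (invWord σ).getD (a - 1) 0

/-- The identity permutation word of `{1, …, m}`. -/
def idWord (m : ℕ) : List ℕ := (List.range m).map (· + 1)

/-- `First k u`: keep only the `k` leftmost occurrences of each letter of `u`. -/
def First (k : ℕ) (u : List ℕ) : List ℕ :=
  (List.range u.length).filterMap fun p =>
    if (u.take p).count (u.getD p 0) < k then some (u.getD p 0) else none


/-- The `{1, 2}`-encoding of the composition type of a word: `enc(x)(p) = 2` if
`χ(x)(p) < χ(x)(p+1)` and `1` otherwise (0-based `p`). -/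
def enc (x : List ℕ) : List ℕ :=
  (List.range (x.length - 1)).map fun p =>
    if (chi x).getD p 0 < (chi x).getD (p + 1) 0 then 2 else 1


def cLE (x : List ℕ) (a : ℕ) : ℕ := x.countP (fun b => b ≤ a)

def Epred (x : List ℕ) (p : ℕ) : Prop := ∃ a, cLE x a = p + 1

open Classical in
noncomputable def eIf (P : Prop) : ℕ := if P then 2 else 1

lemma eIf_congr {P Q : Prop} (h : P ↔ Q) : eIf P = eIf Q := by rw [propext h]

lemma cLE_mono (x : List ℕ) {a a' : ℕ} (h : a ≤ a') : cLE x a ≤ cLE x a' :=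
  List.countP_mono_left (fun b _ hb => by simp only [decide_eq_true_eq] at hb ⊢; omega)

lemma cLE_append (x y : List ℕ) (a : ℕ) : cLE (x ++ y) a = cLE x a + cLE y a :=
  List.countP_append ..

lemma cLE_cons (b : ℕ) (x : List ℕ) (a : ℕ) :
    cLE (b :: x) a = cLE x a + (if b ≤ a then 1 else 0) := by
  unfold cLE; rw [List.countP_cons]; simp

lemma countP_pred_congr (x : List ℕ) (P Q : ℕ → Prop) [DecidablePred P] [DecidablePred Q]
    (h : ∀ b ∈ x, P b ↔ Q b) :
    x.countP (fun b => P b) = x.countP (fun b => Q b) :=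
  List.countP_congr (fun b hb => by simpa using h b hb)

lemma sorted_countP_le {y : List ℕ} (hy : y.Pairwise (· ≤ ·)) {a q : ℕ} (hq : q < y.length)
    (h : a < y[q]) : cLE y a ≤ q := by
  induction y generalizing q with
  | nil => simp at hq
  | cons h0 t ih =>
    rcases List.pairwise_cons.mp hy with ⟨hall, hs⟩
    cases q with
    | zero =>
      simp only [List.getElem_cons_zero] at h
      have hz : cLE (h0 :: t) a = 0 := by
        apply List.countP_eq_zero.mpr
        intro b hb
        simp only [List.mem_cons] at hb
        rcases hb with rfl | hb
        · simp only [decide_eq_true_eq]; omega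
        · have := hall b hb; simp only [decide_eq_true_eq]; omega
      omega
    | succ q =>
      simp only [List.getElem_cons_succ] at h
      have h1 := ih hs (by simpa using hq) h
      have h2 : cLE (h0 :: t) a ≤ cLE t a + 1 := by
        rw [cLE_cons]; split <;> omega
      omega

lemma sorted_lt_countP {y : List ℕ} (hy : y.Pairwise (· ≤ ·)) {a q : ℕ} (hq : q < y.length)
    (h : y[q] ≤ a) : q < cLE y a := by
  induction y generalizing q with
  | nil => simp at hq
  | cons h0 t ih =>
    rcases List.pairwise_cons.mp hy with ⟨hall, hs⟩
    cases q with
    | zero =>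
      simp only [List.getElem_cons_zero] at h
      rw [cLE_cons, if_pos h]; omega
    | succ q =>
      simp only [List.getElem_cons_succ] at h
      have hq' : q < t.length := by simpa using hq
      have h1 := ih hs hq' h
      have h0le : h0 ≤ a := le_trans (hall _ (t.getElem_mem hq')) h
      rw [cLE_cons, if_pos h0le]; omega

lemma sorted_getElem_lt_iff {y : List ℕ} (hy : y.Pairwise (· ≤ ·)) {p : ℕ} (hp : p + 1 < y.length) :
    y[p] < y[p + 1] ↔ ∃ a, cLE y a = p + 1 := by
  constructor
  · intro h
    refine ⟨y[p], ?_⟩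
    have h1 := sorted_lt_countP hy (Nat.lt_of_succ_lt hp) (le_refl _)
    have h2 := sorted_countP_le hy hp h
    omega
  · rintro ⟨a, ha⟩
    by_contra hlt
    push_neg at hlt
    rcases lt_or_ge a (y[p]'(Nat.lt_of_succ_lt hp)) with h' | h'
    · have := sorted_countP_le hy (Nat.lt_of_succ_lt hp) h'; omega
    · have := sorted_lt_countP hy hp (le_trans hlt h'); omega

lemma chi_length (x : List ℕ) : (chi x).length = x.length :=
  (List.perm_insertionSort (· ≤ ·) x).length_eq

lemma cLE_chi (x : List ℕ) (a : ℕ) : cLE (chi x) a = cLE x a :=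
  (List.perm_insertionSort (· ≤ ·) x).countP_eq _

lemma enc_length (x : List ℕ) : (enc x).length = x.length - 1 := by simp [enc]

lemma enc_getElem (x : List ℕ) (p : ℕ) (hp : p < (enc x).length) :
    (enc x)[p] = eIf (Epred x p) := by
  have hp' : p < x.length - 1 := by rw [enc_length] at hp; exact hp
  have h1 : p + 1 < (chi x).length := by rw [chi_length]; omega
  have hs : (chi x).Pairwise (· ≤ ·) := List.pairwise_insertionSort (· ≤ ·) x
  simp only [enc, List.getElem_map, List.getElem_range]
  rw [List.getD_eq_getElem _ _ (Nat.lt_of_succ_lt h1), List.getD_eq_getElem _ _ h1]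
  have hiff : (chi x)[p] < (chi x)[p + 1] ↔ Epred x p := by
    rw [sorted_getElem_lt_iff hs h1]
    unfold Epred
    simp_rw [cLE_chi]
  by_cases hE : Epred x p
  · rw [if_pos (hiff.mpr hE)]; unfold eIf; rw [if_pos hE]
  · rw [if_neg (fun h => hE (hiff.mp h))]; unfold eIf; rw [if_neg hE]

lemma countP_eq_pointwise : ∀ (l1 l2 : List ℕ) (p q : ℕ → Bool) (h : l1.length = l2.length),
    (∀ j (hj : j < l1.length), p (l1[j]) = q (l2[j]'(h ▸ hj))) → l1.countP p = l2.countP q := by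
  intro l1
  induction l1 with
  | nil => intro l2 p q h _; cases l2 with
    | nil => simp
    | cons b t => simp at h
  | cons a t ih =>
    intro l2 p q h hpt
    cases l2 with
    | nil => simp at h
    | cons b t2 =>
      rw [List.countP_cons, List.countP_cons]
      have h0 := hpt 0 (by simp)
      simp only [List.getElem_cons_zero] at h0
      have ht := ih t2 p q (by simpa using h)
        (fun j hj => by
          have := hpt (j + 1) (by simpa using Nat.succ_lt_succ hj)
          simpa only [List.getElem_cons_succ] using this)
      rw [ht, h0]

lemma maxLetter_cons (a : ℕ) (t : List ℕ) : maxLetter (a :: t) = max a (maxLetter t) := rfl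

lemma le_maxLetter {b : ℕ} {v : List ℕ} (h : b ∈ v) : b ≤ maxLetter v := by
  induction v with
  | nil => simp at h
  | cons a t ih =>
    rw [maxLetter_cons]
    rcases List.mem_cons.mp h with rfl | h
    · exact le_max_left _ _
    · exact le_trans (ih h) (le_max_right _ _)

lemma maxLetter_eq_zero_or_mem (v : List ℕ) : maxLetter v = 0 ∨ maxLetter v ∈ v := by
  induction v with
  | nil => left; rfl
  | cons a t ih =>
    rw [maxLetter_cons]
    rcases Nat.le_total a (maxLetter t) with h | h
    · rw [max_eq_right h]
      rcases ih with h0 | h0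
      · left; exact h0
      · right; exact List.mem_cons_of_mem _ h0
    · rw [max_eq_left h]; right; exact List.mem_cons_self

lemma cLE_of_perm_icc {σ : List ℕ} {n : ℕ} (hlen : σ.length = n)
    (hfin : σ.toFinset = Finset.Icc 1 n) : σ.Nodup ∧ ∀ t ≤ n, cLE σ t = t := by
  have h1 : σ.dedup.length = σ.length := by
    rw [← List.card_toFinset, hfin, Nat.card_Icc, hlen]; omega
  have hnd : σ.Nodup := by
    rw [← (List.dedup_sublist σ).eq_of_length h1]; exact σ.nodup_dedup
  refine ⟨hnd, fun t ht => ?_⟩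
  have hms : (σ : Multiset ℕ) = (Finset.Icc 1 n).val := by
    have h2 : (σ : Multiset ℕ).toFinset = Finset.Icc 1 n := hfin
    rw [← h2, Multiset.toFinset_val, Multiset.dedup_eq_self.mpr (by exact_mod_cast hnd)]
  have e1 : cLE σ t = Multiset.countP (fun b => b ≤ t) (σ : Multiset ℕ) :=
    (Multiset.coe_countP _ _).symm
  rw [e1, hms, Multiset.countP_eq_card_filter]
  have e2 : Multiset.filter (fun b => b ≤ t) (Finset.Icc 1 n).val
      = (Finset.filter (fun b => b ≤ t) (Finset.Icc 1 n)).val := rfl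
  rw [e2]
  have e3 : Finset.filter (fun b => b ≤ t) (Finset.Icc 1 n) = Finset.Icc 1 t := by
    ext b; simp only [Finset.mem_filter, Finset.mem_Icc]; omega
  rw [e3]
  have : (Finset.Icc 1 t).val.card = (Finset.Icc 1 t).card := rfl
  rw [this, Nat.card_Icc]; omega

set_option maxHeartbeats 2000000 in
/-- The composition type of a right composition of packed words is obtained by interstice
insertion at position `r = st(u)(i)`:
`enc(u ∘→_i v) = enc(u)(1, …, r-1) · enc(v) · enc(u)(r, …, n-1)`. -/
theorem enc_rightComp (u v σ : List ℕ) (hu : IsPacked u) (hv : IsPacked v) (i : ℕ)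
    (hi : i ∈ Finset.Icc 1 u.length) (hv1 : 1 ≤ v.length) (hσ : IsStdOf u σ) :
    enc (rightComp u i v)
      = (enc u).take (σ.getD (i - 1) 0 - 1) ++ enc v
          ++ (enc u).drop (σ.getD (i - 1) 0 - 1) := by
  obtain ⟨k, hk⟩ := hu
  obtain ⟨s, hs⟩ := hv
  obtain ⟨⟨hσlen, hσfin⟩, hinv⟩ := hσ
  simp only [Finset.mem_Icc] at hi
  obtain ⟨hi1, hin⟩ := hi
  set n := u.length with hn
  set m := v.length with hm
  have hm1 : 1 ≤ m := hv1
  have hn1 : 1 ≤ n := le_trans hi1 hin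
  -- letters
  have humem : ∀ b ∈ u, 1 ≤ b := fun b hb => by
    have h := List.mem_toFinset.mpr hb
    rw [hk] at h; exact (Finset.mem_Icc.mp h).1
  have hvmem : ∀ b ∈ v, 1 ≤ b ∧ b ≤ s := fun b hb => by
    have h := List.mem_toFinset.mpr hb
    rw [hs] at h; exact Finset.mem_Icc.mp h
  have hvne : v ≠ [] := by
    intro h
    rw [hm, h] at hm1; simp at hm1
  have hs1 : 1 ≤ s := by
    obtain ⟨b, hb⟩ := List.exists_mem_of_ne_nil v hvne
    have := hvmem b hb; omega
  have hsmem : s ∈ v := by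
    have h : s ∈ v.toFinset := by rw [hs]; exact Finset.mem_Icc.mpr ⟨hs1, le_refl _⟩
    exact List.mem_toFinset.mp h
  have h1mem : (1:ℕ) ∈ v := by
    have h : (1:ℕ) ∈ v.toFinset := by rw [hs]; exact Finset.mem_Icc.mpr ⟨le_refl _, hs1⟩
    exact List.mem_toFinset.mp h
  have hmax : maxLetter v = s := by
    refine le_antisymm ?_ (le_maxLetter hsmem)
    rcases maxLetter_eq_zero_or_mem v with h | h
    · omega
    · exact (hvmem _ h).2
  -- c and decomposition of u
  have hi1' : i - 1 < n := by omega
  set c := u.getD (i - 1) 0 with hc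
  have hcel : c = u[i - 1]'hi1' := List.getD_eq_getElem _ _ hi1'
  have hc1 : 1 ≤ c := by rw [hcel]; exact humem _ (u.getElem_mem hi1')
  have hud : u = u.take (i - 1) ++ c :: u.drop i := by
    conv_lhs => rw [← List.take_append_drop (i - 1) u]
    rw [List.drop_eq_getElem_cons hi1']
    have h2 : i - 1 + 1 = i := by omega
    rw [h2, ← hcel]
  have hprelen : (u.take (i - 1)).length = i - 1 := by rw [List.length_take]; omega
  have hsuflen : (u.drop i).length = n - i := by rw [List.length_drop]
  have hcLEu : ∀ a, cLE u a
      = cLE (u.take (i - 1)) a + (if c ≤ a then 1 else 0) + cLE (u.drop i) a := by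
    intro a
    conv_lhs => rw [hud]
    rw [cLE_append, cLE_cons]; ring
  -- r
  set r := σ.getD (i - 1) 0 with hr
  have hiσ : i - 1 < σ.length := by rw [hσlen]; omega
  have hσi : r = σ[i - 1]'hiσ := List.getD_eq_getElem _ _ hiσ
  obtain ⟨hnd, hcLEσ⟩ := cLE_of_perm_icc hσlen hσfin
  have hrmem : 1 ≤ r ∧ r ≤ n := by
    have h : r ∈ σ.toFinset := by rw [hσi]; exact List.mem_toFinset.mpr (σ.getElem_mem hiσ)
    rw [hσfin] at h; exact Finset.mem_Icc.mp h
  -- r = cLE pre c + cLE suf (c-1) + 1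
  have hgetDu : ∀ j (hj : j < n), u.getD j 0 = u[j]'(by rw [← hn]; exact hj) :=
    fun j hj => List.getD_eq_getElem _ _ _
  have hgetDσ : ∀ j (hj : j < n), σ.getD j 0 = σ[j]'(by rw [hσlen]; exact hj) :=
    fun j hj => List.getD_eq_getElem _ _ _
  have hrdef : r = cLE (u.take (i - 1)) c + cLE (u.drop i) (c - 1) + 1 := by
    have hσd : σ = σ.take (i - 1) ++ σ[i - 1]'hiσ :: σ.drop i := by
      conv_lhs => rw [← List.take_append_drop (i - 1) σ]
      rw [List.drop_eq_getElem_cons hiσ]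
      have h2 : i - 1 + 1 = i := by omega
      rw [h2]
    have e0 : cLE σ r = r := hcLEσ r hrmem.2
    have hlen1 : (σ.take (i - 1)).length = (u.take (i - 1)).length := by
      rw [List.length_take, List.length_take, hσlen]
    have epre : cLE (σ.take (i - 1)) r = cLE (u.take (i - 1)) c := by
      refine countP_eq_pointwise _ _ _ _ hlen1 ?_
      intro j hj
      have hjlen : j < i - 1 := by
        rw [List.length_take, hσlen] at hj; omega
      have hju : j < n := by omega
      rw [List.getElem_take, List.getElem_take]
      apply decide_eq_decide.mpr
      have hiv := hinv j (i - 1) (by omega) (by omega)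
      rw [hgetDu (i-1) (by omega), hgetDu j hju, hgetDσ (i-1) (by omega),
        hgetDσ j hju] at hiv
      rw [hσi, hcel]
      constructor
      · intro h; by_contra h2; push_neg at h2
        exact absurd (hiv.mp (by omega)) (by omega)
      · intro h; by_contra h2; push_neg at h2
        exact absurd (hiv.mpr (by omega)) (by omega)
    have hlen2 : (σ.drop i).length = (u.drop i).length := by
      rw [List.length_drop, List.length_drop, hσlen]
    have esuf : cLE (σ.drop i) r = cLE (u.drop i) (c - 1) := by
      refine countP_eq_pointwise _ _ _ _ hlen2 ?_
      intro t ht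
      have htlen : i + t < n := by
        rw [List.length_drop, hσlen] at ht; omega
      rw [List.getElem_drop, List.getElem_drop]
      apply decide_eq_decide.mpr
      have hiv := hinv (i - 1) (i + t) (by omega) (by omega)
      rw [hgetDu (i-1) (by omega), hgetDu (i+t) htlen, hgetDσ (i-1) (by omega),
        hgetDσ (i+t) htlen] at hiv
      have hne : σ[i + t]'(by rw [hσlen]; omega) ≠ σ[i - 1]'hiσ := by
        intro h
        have := (hnd.getElem_inj_iff).mp h
        omega
      rw [hσi, hcel]
      constructor
      · intro h
        have h3 : σ[i + t]'(by rw [hσlen]; omega) < σ[i - 1]'hiσ := by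
          rcases lt_or_eq_of_le h with h4 | h4
          · exact h4
          · exact absurd h4 hne
        have := hiv.mpr h3
        omega
      · intro h
        have := hiv.mp (by omega)
        omega
    rw [hσd] at e0
    rw [cLE_append, cLE_cons, epre, esuf, ← hσi, if_pos (le_refl r)] at e0
    omega
  -- decomposition of rightComp
  have hwd : rightComp u i v = Inc (s - 1) c (u.take (i - 1)) ++ Inc (c - 1) 0 v
      ++ Inc (s - 1) (c - 1) (u.drop i) := by
    unfold rightComp
    rw [hmax, ← hc]
  have cLE_Inc : ∀ (α β : ℕ) (x : List ℕ) (a : ℕ), cLE (Inc α β x) a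
      = x.countP (fun b => decide ((if β < b then b + α else b) ≤ a)) := by
    intro α β x a; unfold cLE Inc; rw [List.countP_map]; rfl
  have hwsplit : ∀ a, cLE (rightComp u i v) a =
      (u.take (i - 1)).countP (fun b => decide ((if c < b then b + (s - 1) else b) ≤ a))
      + v.countP (fun b => decide ((if 0 < b then b + (c - 1) else b) ≤ a))
      + (u.drop i).countP (fun b => decide ((if c - 1 < b then b + (s - 1) else b) ≤ a)) := by
    intro a
    rw [hwd, cLE_append, cLE_append, cLE_Inc, cLE_Inc, cLE_Inc]
  -- Claim A
  have hA : ∀ a, a < c → cLE (rightComp u i v) a = cLE u a := by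
    intro a ha
    rw [hwsplit a, hcLEu a, if_neg (by omega)]
    have e1 : (u.take (i - 1)).countP (fun b => decide ((if c < b then b + (s - 1) else b) ≤ a))
        = cLE (u.take (i - 1)) a := by
      apply List.countP_congr
      intro b _
      simp only [decide_eq_true_eq]
      split <;> omega
    have e2 : v.countP (fun b => decide ((if 0 < b then b + (c - 1) else b) ≤ a)) = 0 := by
      apply List.countP_eq_zero.mpr
      intro b hb
      have h1 := (hvmem b hb).1
      simp only [decide_eq_true_eq]
      rw [if_pos (by omega : 0 < b)]
      omega
    have e3 : (u.drop i).countP (fun b => decide ((if c - 1 < b then b + (s - 1) else b) ≤ a))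
        = cLE (u.drop i) a := by
      apply List.countP_congr
      intro b _
      simp only [decide_eq_true_eq]
      split <;> omega
    rw [e1, e2, e3]
  -- Claim B
  have hB : ∀ j, j + 2 ≤ s → cLE (rightComp u i v) (c + j) = (r - 1) + cLE v (j + 1) := by
    intro j hj
    rw [hwsplit]
    have e1 : (u.take (i - 1)).countP
        (fun b => decide ((if c < b then b + (s - 1) else b) ≤ c + j))
        = cLE (u.take (i - 1)) c := by
      apply List.countP_congr
      intro b _
      simp only [decide_eq_true_eq]
      split <;> omega
    have e2 : v.countP (fun b => decide ((if 0 < b then b + (c - 1) else b) ≤ c + j))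
        = cLE v (j + 1) := by
      apply List.countP_congr
      intro b hb
      have h1 := (hvmem b hb).1
      simp only [decide_eq_true_eq]
      rw [if_pos (by omega : 0 < b)]
      omega
    have e3 : (u.drop i).countP
        (fun b => decide ((if c - 1 < b then b + (s - 1) else b) ≤ c + j))
        = cLE (u.drop i) (c - 1) := by
      apply List.countP_congr
      intro b _
      simp only [decide_eq_true_eq]
      split <;> omega
    rw [e1, e2, e3]
    omega
  -- Claim C
  have hC : ∀ a, c + s ≤ a + 1 → cLE (rightComp u i v) a = cLE u (a - (s - 1)) + (m - 1) := by
    intro a ha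
    rw [hwsplit, hcLEu (a - (s - 1)), if_pos (by omega)]
    have e1 : (u.take (i - 1)).countP
        (fun b => decide ((if c < b then b + (s - 1) else b) ≤ a))
        = cLE (u.take (i - 1)) (a - (s - 1)) := by
      apply List.countP_congr
      intro b _
      simp only [decide_eq_true_eq]
      split <;> omega
    have e2 : v.countP (fun b => decide ((if 0 < b then b + (c - 1) else b) ≤ a))
        = v.length := by
      apply List.countP_eq_length.mpr
      intro b hb
      have h1 := (hvmem b hb).1
      have h2 := (hvmem b hb).2
      simp only [decide_eq_true_eq]
      rw [if_pos (by omega : 0 < b)]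
      omega
    have e3 : (u.drop i).countP
        (fun b => decide ((if c - 1 < b then b + (s - 1) else b) ≤ a))
        = cLE (u.drop i) (a - (s - 1)) := by
      apply List.countP_congr
      intro b _
      simp only [decide_eq_true_eq]
      split <;> omega
    rw [e1, e2, e3]
    omega
  -- counts of v
  have hv0 : cLE v 0 = 0 := by
    apply List.countP_eq_zero.mpr
    intro b hb
    have := (hvmem b hb).1
    simp only [decide_eq_true_eq]
    omega
  have hvs : cLE v s = m := by
    rw [hm]
    apply List.countP_eq_length.mpr
    intro b hb
    simp only [decide_eq_true_eq]
    exact (hvmem b hb).2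
  have hv1' : ∀ a, 1 ≤ a → 1 ≤ cLE v a := by
    intro a ha
    have : 0 < cLE v a := List.countP_pos_iff.mpr ⟨1, h1mem, by simp only [decide_eq_true_eq]; omega⟩
    omega
  have hvlt : ∀ a, a < s → cLE v a + 1 ≤ m := by
    intro a ha
    have h1 := List.length_eq_countP_add_countP (fun b => decide (b ≤ a)) (l := v)
    have h2 : 0 < v.countP (fun b => decide ¬(decide (b ≤ a) = true)) :=
      List.countP_pos_iff.mpr ⟨s, hsmem, by simp only [decide_eq_true_eq, decide_not]; simp; omega⟩
    rw [hm]
    unfold cLE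
    omega
  -- bounds on cLE u around c
  have hucr : r ≤ cLE u c := by
    have h1 := hcLEu c
    rw [if_pos (le_refl c)] at h1
    have h2 : cLE (u.drop i) (c - 1) ≤ cLE (u.drop i) c := cLE_mono _ (by omega)
    omega
  have hucm : cLE u (c - 1) + 1 ≤ r := by
    have h1 := hcLEu (c - 1)
    rw [if_neg (by omega)] at h1
    have h2 : cLE (u.take (i - 1)) (c - 1) ≤ cLE (u.take (i - 1)) c := cLE_mono _ (by omega)
    omega
  have hwge : ∀ a, c ≤ a → r ≤ cLE (rightComp u i v) a := by
    intro a ha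
    rcases le_or_gt (c + s) (a + 1) with h2 | h2
    · rw [hC a h2]
      have h3 : cLE u c ≤ cLE u (a - (s - 1)) := cLE_mono _ (by omega)
      omega
    · have hBa := hB (a - c) (by omega)
      rw [show c + (a - c) = a by omega] at hBa
      have h1 : 1 ≤ cLE v (a - c + 1) := hv1' _ (by omega)
      omega
  -- the three interval equivalences
  have hE1 : ∀ p, p + 1 < r → (Epred (rightComp u i v) p ↔ Epred u p) := by
    intro p hp
    constructor
    · rintro ⟨a, ha⟩
      rcases lt_or_ge a c with h | h
      · exact ⟨a, by rw [← hA a h]; exact ha⟩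
      · have := hwge a h; omega
    · rintro ⟨a, ha⟩
      rcases lt_or_ge a c with h | h
      · exact ⟨a, by rw [hA a h]; exact ha⟩
      · have := le_trans hucr (cLE_mono u h)
        omega
  have hE2 : ∀ q, q + 1 < m → (Epred (rightComp u i v) (r - 1 + q) ↔ Epred v q) := by
    intro q hq
    constructor
    · rintro ⟨a, ha⟩
      have ha' : cLE (rightComp u i v) a = r + q := by omega
      have h1 : c ≤ a := by
        by_contra h
        push_neg at h
        rw [hA a h] at ha'
        have h2 : cLE u a ≤ cLE u (c - 1) := cLE_mono u (by omega)
        omega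
      have h2 : a + 1 < c + s := by
        by_contra h
        push_neg at h
        rw [hC a h] at ha'
        have h3 : cLE u c ≤ cLE u (a - (s - 1)) := cLE_mono u (by omega)
        omega
      have hBa := hB (a - c) (by omega)
      rw [show c + (a - c) = a by omega] at hBa
      exact ⟨a - c + 1, by omega⟩
    · rintro ⟨b, hb⟩
      have hb1 : 1 ≤ b := by
        rcases Nat.eq_zero_or_pos b with rfl | h
        · rw [hv0] at hb; omega
        · exact h
      have hbs : b + 1 ≤ s := by
        by_contra h
        push_neg at h
        have : cLE v s ≤ cLE v b := cLE_mono v (by omega)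
        omega
      have hBb := hB (b - 1) (by omega)
      refine ⟨c + (b - 1), ?_⟩
      rw [hBb, show b - 1 + 1 = b by omega, hb]
      omega
  have hE3 : ∀ q, r ≤ q + 1 → q + 1 < n →
      (Epred (rightComp u i v) (q + (m - 1)) ↔ Epred u q) := by
    intro q hq1 hq2
    constructor
    · rintro ⟨a, ha⟩
      have ha' : cLE (rightComp u i v) a = q + m := by omega
      have h1 : c + s ≤ a + 1 := by
        by_contra h
        push_neg at h
        rcases lt_or_ge a c with h2 | h2
        · rw [hA a h2] at ha'
          have h3 : cLE u a ≤ cLE u (c - 1) := cLE_mono u (by omega)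
          omega
        · have hBa := hB (a - c) (by omega)
          rw [show c + (a - c) = a by omega] at hBa
          have h4 : cLE v (a - c + 1) + 1 ≤ m := hvlt _ (by omega)
          omega
      refine ⟨a - (s - 1), ?_⟩
      rw [hC a h1] at ha'
      omega
    · rintro ⟨a, ha⟩
      have h1 : c ≤ a := by
        by_contra h
        push_neg at h
        have h3 : cLE u a ≤ cLE u (c - 1) := cLE_mono u (by omega)
        omega
      refine ⟨a + (s - 1), ?_⟩
      rw [hC (a + (s - 1)) (by omega), show a + (s - 1) - (s - 1) = a by omega, ha]
      omega
  -- lengths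
  have hwlen : (rightComp u i v).length = n + m - 1 := by
    rw [hwd]
    simp only [List.length_append, Inc, List.length_map, List.length_take, List.length_drop]
    omega
  have hencw : (enc (rightComp u i v)).length = n + m - 2 := by
    rw [enc_length, hwlen]; omega
  have hencu : (enc u).length = n - 1 := by rw [enc_length]
  have hencv : (enc v).length = m - 1 := by rw [enc_length]
  have htakelen : ((enc u).take (r - 1)).length = r - 1 := by
    rw [List.length_take, hencu]; omega
  -- final assembly
  apply List.ext_getElem
  · rw [hencw]
    simp only [List.length_append, List.length_take, List.length_drop, hencu, hencv]
    omega
  · intro p hp1 hp2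
    have hp : p < n + m - 2 := by rw [hencw] at hp1; exact hp1
    rw [enc_getElem _ p hp1]
    by_cases h1 : p < r - 1
    · have hAl : p < ((enc u).take (r - 1)).length := by rw [htakelen]; omega
      have hABl : p < ((enc u).take (r - 1) ++ enc v).length := by
        rw [List.length_append]; omega
      rw [List.getElem_append_left hABl, List.getElem_append_left hAl, List.getElem_take]
      rw [enc_getElem u p (by rw [hencu]; omega)]
      exact eIf_congr (hE1 p (by omega))
    · by_cases h2 : p < r - 1 + (m - 1)
      · have hABl : p < ((enc u).take (r - 1) ++ enc v).length := by
          rw [List.length_append, htakelen, hencv]; omega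
        rw [List.getElem_append_left hABl, List.getElem_append_right (by rw [htakelen]; omega)]
        simp only [htakelen]
        rw [enc_getElem v (p - (r - 1)) (by rw [hencv]; omega)]
        have hiff := hE2 (p - (r - 1)) (by omega)
        rw [show r - 1 + (p - (r - 1)) = p by omega] at hiff
        exact eIf_congr hiff
      · have hABl : ((enc u).take (r - 1) ++ enc v).length ≤ p := by
          rw [List.length_append, htakelen, hencv]; omega
        rw [List.getElem_append_right hABl]
        simp only [List.length_append, htakelen, hencv]
        rw [List.getElem_drop]
        have hidx : r - 1 + (p - (r - 1 + (m - 1))) = p - (m - 1) := by omega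
        simp only [hidx]
        rw [enc_getElem u (p - (m - 1)) (by rw [hencu]; omega)]
        have hiff := hE3 (p - (m - 1)) (by omega) (by omega)
        rw [show p - (m - 1) + (m - 1) = p by omega] at hiff
        exact eIf_congr hiff
end

section
/- The symmetric group action is equivariant for the left composition of packed words: let u be a packed word with letter set {1,…,n}, σ a permutation of {1,…,n}, v a packed word with letter set {1,…,m}, and i ∈ {1,…,n}. Then (u·σ) ∘←_i v = (u ∘←_{σ(i)} v) · B_i(σ, id_m), where id_m is the identity permutation of {1,…,m}. -/
open List

lemma myIndexOf_append_right {l₁ l₂ : List ℕ} {b : ℕ} (h : b ∉ l₁) :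
    (l₁ ++ l₂).idxOf b = l₁.length + l₂.idxOf b := by
  induction l₁ with
  | nil => simp
  | cons a t ih =>
    simp only [mem_cons, not_or] at h
    rw [cons_append, idxOf_cons_ne _ (Ne.symm h.1), ih h.2, length_cons]
    omega

lemma myIndexOf_map {f : ℕ → ℕ} {a b : ℕ} (h : ∀ x, f x = b ↔ x = a) (l : List ℕ) :
    (l.map f).idxOf b = l.idxOf a := by
  induction l with
  | nil => simp
  | cons c t ih =>
    by_cases hc : c = a
    · subst hc
      rw [map_cons, show f c = b from (h c).mpr rfl, idxOf_cons_self, idxOf_cons_self]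
    · rw [map_cons, idxOf_cons_ne _ (fun e => hc ((h c).mp e)),
        idxOf_cons_ne _ (fun e => hc e), ih]

lemma myMem_map {f : ℕ → ℕ} {a b : ℕ} (h : ∀ x, f x = b ↔ x = a) (l : List ℕ) :
    b ∈ l.map f ↔ a ∈ l := by
  constructor
  · rintro hm
    obtain ⟨x, hx, hfx⟩ := mem_map.1 hm
    rwa [← (h x).mp hfx]
  · intro ha
    exact mem_map.2 ⟨a, ha, (h a).mpr rfl⟩

lemma myIndexOf_range {t m : ℕ} (h : t < m) : (List.range m).idxOf t = t := by
  induction m with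
  | zero => omega
  | succ m ih =>
    rw [List.range_succ]
    rcases Nat.lt_or_ge t m with h' | h'
    · rw [idxOf_append_of_mem (by simpa using h'), ih h']
    · have ht : t = m := by omega
      subst ht
      rw [myIndexOf_append_right (by simp), length_range, idxOf_cons_self]
      omega

lemma le_maxLetter_s13 {v : List ℕ} {x : ℕ} (h : x ∈ v) : x ≤ v.foldr max 0 := by
  induction v with
  | nil => simp at h
  | cons c t ih =>
    rcases mem_cons.1 h with h | h
    · subst h; exact le_max_left _ _
    · simp only [foldr_cons]
      exact le_max_of_le_right (ih h)

lemma maxLetter_mem {v : List ℕ} (h : v.foldr max 0 ≠ 0) : v.foldr max 0 ∈ v := by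
  induction v with
  | nil => simp at h
  | cons c t ih =>
    simp only [foldr_cons] at h ⊢
    rcases max_choice c (t.foldr max 0) with h' | h'
    · rw [h']; exact mem_cons_self
    · rw [h'] at h ⊢
      exact mem_cons_of_mem _ (ih h)

lemma myFlatMap_congr {f g : ℕ → List ℕ} {l : List ℕ} (h : ∀ a ∈ l, f a = g a) :
    l.flatMap f = l.flatMap g := by
  induction l with
  | nil => rfl
  | cons c t ih =>
    rw [List.flatMap_cons, List.flatMap_cons, h c (by simp),
      ih fun a ha => h a (by simp [ha])]

lemma myNodup {n : ℕ} {σ : List ℕ} (h : IsPermWord n σ) : σ.Nodup := by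
  have h1 : σ.toFinset.card = σ.length := by
    rw [h.2, Nat.card_Icc, h.1]; omega
  rw [List.card_toFinset] at h1
  rw [← (List.dedup_sublist σ).eq_of_length h1]
  exact σ.nodup_dedup

lemma myMaxLetter {m : ℕ} {v : List ℕ} (hv : IsPackedOn m v) (hm : 1 ≤ m) :
    maxLetter v = m := by
  have hmv : m ∈ v := by
    rw [← List.mem_toFinset, hv, Finset.mem_Icc]; omega
  have h1 : m ≤ maxLetter v := le_maxLetter_s13 hmv
  have h2 : maxLetter v ∈ v := maxLetter_mem (by
    simp only [maxLetter] at h1; omega)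
  have h3 : maxLetter v ≤ m := by
    rw [← List.mem_toFinset, hv, Finset.mem_Icc] at h2; omega
  omega

lemma invWord_getD {σ : List ℕ} {a : ℕ} (h1 : 1 ≤ a) (h2 : a - 1 < σ.length) :
    (invWord σ).getD (a - 1) 0 = σ.idxOf a + 1 := by
  rw [invWord, List.getD_eq_getElem _ _ (by simpa using h2), List.getElem_map,
    List.getElem_range]
  congr 2
  omega

/-- Equivariance of the symmetric group action for the left composition of packed words:
`(u · σ) ∘←_i v = (u ∘←_{σ(i)} v) · B_i(σ, id_m)`. -/
theorem leftComp_equivariant (n m i : ℕ) (u σ v : List ℕ)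
    (hu : IsPackedOn n u) (hσ : IsPermWord n σ) (hv : IsPackedOn m v)
    (hm : 1 ≤ m) (hi : i ∈ Finset.Icc 1 n) :
    leftComp (permAct u σ) i v
      = permAct (leftComp u (σ.getD (i - 1) 0) v) (blockComp σ i (idWord m)) := by
  obtain ⟨hσl, hσf⟩ := hσ
  rw [Finset.mem_Icc] at hi
  set j := σ.getD (i - 1) 0 with hj
  have hin : i - 1 < σ.length := by omega
  have hmemσ : ∀ a, a ∈ σ ↔ 1 ≤ a ∧ a ≤ n := fun a => by
    rw [← List.mem_toFinset, hσf, Finset.mem_Icc]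
  have hmemv : ∀ c, c ∈ v → 1 ≤ c ∧ c ≤ m := fun c hc => by
    rw [← List.mem_toFinset, hv, Finset.mem_Icc] at hc; exact hc
  have hnd : σ.Nodup := myNodup ⟨hσl, hσf⟩
  have hmv : maxLetter v = m := myMaxLetter hv hm
  have hjσ : j ∈ σ := by
    rw [hj, List.getD_eq_getElem _ _ hin]; exact List.getElem_mem _
  have hjn : 1 ≤ j ∧ j ≤ n := (hmemσ j).1 hjσ
  set S1 := σ.take (i - 1) with hS1
  set S2 := σ.drop i with hS2
  have hdec : σ = S1 ++ j :: S2 := by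
    conv_lhs => rw [← List.take_append_drop (i - 1) σ]
    rw [hS1, hS2]
    congr 1
    rw [List.drop_eq_getElem_cons hin, ← List.getD_eq_getElem σ 0 hin, ← hj]
    congr 2
    omega
  have hlenS1 : S1.length = i - 1 := by rw [hS1, List.length_take]; omega
  have hlenS2 : S2.length = n - i := by rw [hS2, List.length_drop]; omega
  have hndd : (S1 ++ j :: S2).Nodup := hdec ▸ hnd
  have hjS1 : j ∉ S1 := fun h => (List.disjoint_of_nodup_append hndd) h (by simp)
  have hidxj : σ.idxOf j = i - 1 := by
    rw [hdec, myIndexOf_append_right hjS1, hlenS1, List.idxOf_cons_self]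
    omega
  have hidl : (idWord m).length = m := by simp [idWord]
  have hτdef : blockComp σ i (idWord m)
      = Inc (m - 1) j S1 ++ (Inc (j - 1) 0 (idWord m) ++ Inc (m - 1) (j - 1) S2) := by
    rw [blockComp, hidl, ← hj, ← hS1, ← hS2, List.append_assoc]
  have hB : Inc (j - 1) 0 (idWord m) = (List.range m).map (fun x => x + j) := by
    rw [Inc, idWord, List.map_map]
    apply List.map_congr_left
    intro t _
    simp only [Function.comp]
    rw [if_pos (Nat.succ_pos t)]
    omega
  have hτlen : (blockComp σ i (idWord m)).length = n + m - 1 := by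
    simp only [hτdef, List.length_append, Inc, List.length_map, hidl, hlenS1, hlenS2]
    omega
  have hfτ : ∀ b, 1 ≤ b → b ≤ n + m - 1 →
      (invWord (blockComp σ i (idWord m))).getD (b - 1) 0
        = (blockComp σ i (idWord m)).idxOf b + 1 := fun b h1 h2 =>
    invWord_getD h1 (by omega)
  rw [leftComp, leftComp, permAct, permAct, List.flatMap_map, List.map_flatMap]
  apply myFlatMap_congr
  intro a ha
  have han : 1 ≤ a ∧ a ≤ n := by
    rw [← List.mem_toFinset, hu, Finset.mem_Icc] at ha; exact ha
  have hg : (invWord σ).getD (a - 1) 0 = σ.idxOf a + 1 :=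
    invWord_getD han.1 (by omega)
  have haσ : a ∈ σ := (hmemσ a).2 han
  rw [hmv, hg]
  by_cases haj : a = j
  · -- a = j
    subst haj
    rw [hidxj, if_pos (by omega), if_pos rfl]
    rw [Inc, Inc, List.map_map]
    apply List.map_congr_left
    intro c hc
    have hc1 : 1 ≤ c ∧ c ≤ m := hmemv c hc
    simp only [Function.comp]
    rw [if_pos (by omega : (0:ℕ) < c), if_pos (by omega : (0:ℕ) < c)]
    have hb1 : (1:ℕ) ≤ c + (j - 1) := by omega
    rw [hfτ (c + (j - 1)) hb1 (by omega)]
    have hbB : c + (j - 1) = (c - 1) + j := by omega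
    have hnA : c + (j - 1) ∉ Inc (m - 1) j S1 := by
      rw [Inc]
      intro hmem
      obtain ⟨x, hx, hfx⟩ := List.mem_map.1 hmem
      have hxj : x ≠ j := fun e => hjS1 (e ▸ hx)
      split_ifs at hfx <;> omega
    rw [hτdef, myIndexOf_append_right hnA,
      List.idxOf_append_of_mem (by
        rw [hB, hbB]
        exact List.mem_map.2 ⟨c - 1, List.mem_range.2 (by omega), rfl⟩),
      hB, hbB,
      myIndexOf_map (f := fun x => x + j) (a := c - 1) (b := c - 1 + j)
        (fun x => by show x + j = c - 1 + j ↔ x = c - 1; omega) (List.range m),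
      myIndexOf_range (by omega : c - 1 < m),
      Inc, List.length_map, hlenS1]
    omega
  · -- a ≠ j
    have hane : ¬ (σ.idxOf a + 1 = i) := by
      intro he
      exact haj ((List.idxOf_inj haσ).1 (by omega))
    rw [if_neg hane, if_neg haj, List.map_cons, List.map_nil]
    have hiffA : ∀ x, (if j < x then x + (m - 1) else x)
        = (if j < a then a + (m - 1) else a) ↔ x = a := by
      intro x; split_ifs <;> omega
    set b := if j < a then a + (m - 1) else a with hbdef
    have hb1 : 1 ≤ b ∧ b ≤ n + m - 1 := by rw [hbdef]; split_ifs <;> omega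
    rw [hfτ b hb1.1 hb1.2, hτdef]
    rcases (by
        rcases List.mem_append.1 (by rw [← hdec]; exact haσ : a ∈ S1 ++ j :: S2) with h | h
        · exact Or.inl h
        · rcases List.mem_cons.1 h with h | h
          · exact absurd h haj
          · exact Or.inr h : a ∈ S1 ∨ a ∈ S2) with haS | haS
    · -- a ∈ S1
      have hidxa : σ.idxOf a = S1.idxOf a := by
        rw [hdec, List.idxOf_append_of_mem haS]
      have hlt : S1.idxOf a < i - 1 := hlenS1 ▸ List.idxOf_lt_length_iff.2 haS
      have hbA : b ∈ Inc (m - 1) j S1 := by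
        rw [Inc]; exact (myMem_map hiffA S1).2 haS
      rw [if_neg (by omega), List.idxOf_append_of_mem hbA, Inc,
        myIndexOf_map hiffA, hidxa]
    · -- a ∈ S2
      have haS1 : a ∉ S1 := fun h' =>
        (List.disjoint_of_nodup_append hndd) h' (by simp [haS])
      have hidxa : σ.idxOf a = i + S2.idxOf a := by
        rw [hdec, myIndexOf_append_right haS1, hlenS1,
          List.idxOf_cons_ne _ (Ne.symm haj)]
        omega
      have htlt : S2.idxOf a < n - i := hlenS2 ▸ List.idxOf_lt_length_iff.2 haS
      have hnA : b ∉ Inc (m - 1) j S1 := by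
        rw [Inc]; exact fun hmem => haS1 ((myMem_map hiffA S1).1 hmem)
      have hnB : b ∉ Inc (j - 1) 0 (idWord m) := by
        rw [hB]
        intro hmem
        obtain ⟨x, hx, hfx⟩ := List.mem_map.1 hmem
        rw [List.mem_range] at hx
        rw [hbdef] at hfx
        split_ifs at hfx <;> omega
      have hiffC : ∀ x, (if j - 1 < x then x + (m - 1) else x) = b ↔ x = a := by
        intro x; rw [hbdef]; split_ifs <;> omega
      rw [if_pos (by omega), myIndexOf_append_right hnA, myIndexOf_append_right hnB,
        hB, List.length_map, List.length_range, Inc, List.length_map, hlenS1,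
        Inc, myIndexOf_map hiffC, hidxa]
      congr 1
      omega
end
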